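/- Let G be a connected graph on n ≥ 2 vertices with distance matrix D(G) and eigenvalues listed in nonincreasing order. Then λ_2(D(G)) ≥ -1, with equality if and only if G is the complete graph K_n. -/

import Mathlib

noncomputable def sortedEigenvalues {ι : Type*} [Fintype ι] [DecidableEq ι]
    (A : Matrix ι ι ℝ) (hA : A.IsHermitian) : List ℝ :=
  (Finset.univ.val.map hA.eigenvalues).sort (· ≤ ·)

/-- `eig A hA k` is the `k`-th largest eigenvalue of `A` (1-indexed). -/
noncomputable def eig {ι : Type*} [Fintype ι] [DecidableEq ι]
    (A : Matrix ι ι ℝ) (hA : A.IsHermitian) (k : ℕ) : ℝ :=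
  (sortedEigenvalues A hA)[Fintype.card ι - k]!

open Matrix RealInnerProductSpace

section SortedHelpers

variable {l : List ℝ} {p : ℝ → Prop} [DecidablePred p]

lemma drop_pair {m : ℕ} (hm : m + 2 = l.length) :
    l.drop m = [l[m]'(by omega), l[m+1]'(by omega)] := by
  have h1 := (List.getElem_cons_drop (as := l) (i := m) (by omega)).symm
  have h2 := (List.getElem_cons_drop (as := l) (i := m+1) (by omega)).symm
  have h3 : l.drop (m + 1 + 1) = [] := by
    rw [show m + 1 + 1 = l.length from by omega, List.drop_length]
  rw [h1, h2, h3]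

lemma drop_head {m : ℕ} (hm : m < l.length) : l[m]'hm ∈ l.drop m := by
  rw [← List.getElem_cons_drop (as := l) (i := m) hm]
  exact List.mem_cons_self

lemma helperA (hs : l.Pairwise (· ≤ ·)) {m : ℕ} (hm : m + 2 = l.length)
    (hp : ∀ a b, p a → a ≤ b → p b)
    (h2 : 2 ≤ (l.filter (fun a => decide (p a))).length) :
    p (l[m]'(by omega)) := by
  by_contra hnp
  have hmemdrop : (l[m]'(by omega)) ∈ l.drop m := drop_head (by omega)
  have h0 : (l.take m).filter (fun a => decide (p a)) = [] := by
    rw [List.filter_eq_nil_iff]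
    intro a ha
    simp only [decide_eq_true_eq]
    intro hpa
    exact hnp (hp _ _ hpa (hs.rel_of_mem_take_of_mem_drop ha hmemdrop))
  have hd : ((l.drop m).filter (fun a => decide (p a))).length ≤ 1 := by
    rw [drop_pair hm, List.filter_cons_of_neg (by simpa using hnp)]
    exact List.length_filter_le _ _
  have hsplit := congrArg (fun t => (t.filter (fun a => decide (p a))).length)
    (List.take_append_drop m l)
  simp only [List.filter_append, List.length_append, h0, List.length_nil] at hsplit
  omega

lemma helperB (hs : l.Pairwise (· ≤ ·)) {m : ℕ} (hm : m + 2 = l.length)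
    (hp : ∀ a b, p a → a ≤ b → p b)
    (h1 : (l.filter (fun a => decide (p a))).length ≤ 1) :
    ¬ p (l[m]'(by omega)) := by
  intro hpm
  have hnext : p (l[m+1]'(by omega)) := by
    refine hp _ _ hpm ?_
    refine hs.rel_of_mem_take_of_mem_drop (i := m+1) ?_ (drop_head (by omega))
    have hlt : m < (l.take (m+1)).length := by
      simp only [List.length_take]
      omega
    have := List.getElem_take (xs := l) (j := m+1) (i := m) (h := hlt)
    rw [← this]
    exact List.getElem_mem _
  have hd : ((l.drop m).filter (fun a => decide (p a))).length = 2 := by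
    rw [drop_pair hm]
    rw [List.filter_cons_of_pos (by simpa using hpm),
      List.filter_cons_of_pos (by simpa using hnext)]
    rfl
  have hsplit := congrArg (fun t => (t.filter (fun a => decide (p a))).length)
    (List.take_append_drop m l)
  simp only [List.filter_append, List.length_append, hd] at hsplit
  omega

end SortedHelpers

section EigHelpers

variable {ι : Type*} [Fintype ι] [DecidableEq ι] {A : Matrix ι ι ℝ}

lemma sortedEigenvalues_length (hA : A.IsHermitian) :
    (sortedEigenvalues A hA).length = Fintype.card ι := by
  simp [sortedEigenvalues, Multiset.length_sort]

lemma sortedEigenvalues_sorted (hA : A.IsHermitian) :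
    (sortedEigenvalues A hA).Pairwise (· ≤ ·) :=
  Multiset.pairwise_sort _ _

lemma filter_length_eq (hA : A.IsHermitian) (p : ℝ → Prop) [DecidablePred p] :
    ((sortedEigenvalues A hA).filter (fun a => decide (p a))).length
      = (Finset.univ.filter (fun i => p (hA.eigenvalues i))).card := by
  have h1 : ((sortedEigenvalues A hA : List ℝ) : Multiset ℝ)
      = Finset.univ.val.map hA.eigenvalues := Multiset.sort_eq _ _
  have h2 : Multiset.card (Multiset.filter p
        ((sortedEigenvalues A hA : List ℝ) : Multiset ℝ))
      = ((sortedEigenvalues A hA).filter (fun a => decide (p a))).length := by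
    rw [Multiset.filter_coe, Multiset.coe_card]
  rw [← h2, h1, ← Multiset.countP_eq_card_filter, Multiset.countP_map]
  rfl

lemma le_eig2 (hA : A.IsHermitian) (hcard : 2 ≤ Fintype.card ι) {c : ℝ} {i j : ι}
    (hij : i ≠ j) (hi : c ≤ hA.eigenvalues i) (hj : c ≤ hA.eigenvalues j) :
    c ≤ eig A hA 2 := by
  have hlen := sortedEigenvalues_length hA
  have hlt : Fintype.card ι - 2 < (sortedEigenvalues A hA).length := by omega
  rw [eig, getElem!_pos (sortedEigenvalues A hA) (Fintype.card ι - 2) hlt]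
  exact helperA (p := fun a => c ≤ a) (sortedEigenvalues_sorted hA) (by omega)
    (fun a b ha hab => ha.trans hab)
    (by
      rw [filter_length_eq]
      exact Finset.one_lt_card.mpr
        ⟨i, by simp [hi], j, by simp [hj], hij⟩)

lemma lt_eig2 (hA : A.IsHermitian) (hcard : 2 ≤ Fintype.card ι) {c : ℝ} {i j : ι}
    (hij : i ≠ j) (hi : c < hA.eigenvalues i) (hj : c < hA.eigenvalues j) :
    c < eig A hA 2 := by
  have hlen := sortedEigenvalues_length hA
  have hlt : Fintype.card ι - 2 < (sortedEigenvalues A hA).length := by omega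
  rw [eig, getElem!_pos (sortedEigenvalues A hA) (Fintype.card ι - 2) hlt]
  exact helperA (p := fun a => c < a) (sortedEigenvalues_sorted hA) (by omega)
    (fun a b ha hab => ha.trans_le hab)
    (by
      rw [filter_length_eq]
      exact Finset.one_lt_card.mpr
        ⟨i, by simp [hi], j, by simp [hj], hij⟩)

lemma eig2_le (hA : A.IsHermitian) (hcard : 2 ≤ Fintype.card ι) {c : ℝ}
    (h : ∀ i j, c < hA.eigenvalues i → c < hA.eigenvalues j → i = j) :
    eig A hA 2 ≤ c := by
  have hlen := sortedEigenvalues_length hA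
  have hlt : Fintype.card ι - 2 < (sortedEigenvalues A hA).length := by omega
  rw [eig, getElem!_pos (sortedEigenvalues A hA) (Fintype.card ι - 2) hlt]
  by_contra hc
  push_neg at hc
  refine helperB (p := fun a => c < a) (sortedEigenvalues_sorted hA) (by omega)
    (fun a b ha hab => ha.trans_le hab) ?_ hc
  rw [filter_length_eq]
  exact Finset.card_le_one.mpr
    (fun a ha b hb => h a b (by simpa using ha) (by simpa using hb))

end EigHelpers

section Spectral

variable {ι : Type*} [Fintype ι] [DecidableEq ι] {A : Matrix ι ι ℝ}

noncomputable def toE {ι : Type*} [Fintype ι] : (ι → ℝ) ≃ₗ[ℝ] EuclideanSpace ℝ ι :=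
  (WithLp.linearEquiv 2 ℝ (ι → ℝ)).symm

lemma toE_apply {x : ι → ℝ} {i : ι} : toE x i = x i := rfl

lemma inner_toE (x y : ι → ℝ) : ⟪toE x, toE y⟫ = x ⬝ᵥ y := by
  simp only [PiLp.inner_apply, toE_apply, RCLike.inner_apply, conj_trivial]
  exact Finset.sum_congr rfl fun i _ => mul_comm _ _

lemma repr_mulVec (hA : A.IsHermitian) (w : ι → ℝ) (i : ι) :
    hA.eigenvectorBasis.repr (toE (A *ᵥ w)) i
      = hA.eigenvalues i * hA.eigenvectorBasis.repr (toE w) i := by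
  have hT : Aᵀ = A := by
    rw [← Matrix.conjTranspose_eq_transpose_of_trivial, hA.eq]
  have hv := hA.mulVec_eigenvectorBasis i
  rw [OrthonormalBasis.repr_apply_apply, OrthonormalBasis.repr_apply_apply]
  have e1 : (inner ℝ (hA.eigenvectorBasis i) (toE (A *ᵥ w)) : ℝ)
      = ⇑(hA.eigenvectorBasis i) ⬝ᵥ (A *ᵥ w) := inner_toE _ _
  have e2 : (inner ℝ (hA.eigenvectorBasis i) (toE w) : ℝ)
      = ⇑(hA.eigenvectorBasis i) ⬝ᵥ w := inner_toE _ _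
  rw [e1, e2, Matrix.dotProduct_mulVec]
  have hsymm : ⇑(hA.eigenvectorBasis i) ᵥ* A = A *ᵥ ⇑(hA.eigenvectorBasis i) := by
    rw [← Matrix.mulVec_transpose, hT]
  rw [hsymm, hv, smul_dotProduct]
  simp

lemma dot_self_eq (hA : A.IsHermitian) (w : ι → ℝ) :
    w ⬝ᵥ w = ∑ i, (hA.eigenvectorBasis.repr (toE w) i) ^ 2 := by
  calc w ⬝ᵥ w = ⟪toE w, toE w⟫ := (inner_toE _ _).symm
    _ = ⟪hA.eigenvectorBasis.repr (toE w), hA.eigenvectorBasis.repr (toE w)⟫ :=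
        (hA.eigenvectorBasis.repr.inner_map_map _ _).symm
    _ = ∑ i, (hA.eigenvectorBasis.repr (toE w) i) ^ 2 := by
        simp only [PiLp.inner_apply, RCLike.inner_apply, conj_trivial]
        exact Finset.sum_congr rfl fun i _ => (sq _).symm

lemma dot_mulVec_eq (hA : A.IsHermitian) (w : ι → ℝ) :
    w ⬝ᵥ (A *ᵥ w) = ∑ i, hA.eigenvalues i * (hA.eigenvectorBasis.repr (toE w) i) ^ 2 := by
  calc w ⬝ᵥ (A *ᵥ w) = ⟪toE w, toE (A *ᵥ w)⟫ := (inner_toE _ _).symm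
    _ = ⟪hA.eigenvectorBasis.repr (toE w), hA.eigenvectorBasis.repr (toE (A *ᵥ w))⟫ :=
        (hA.eigenvectorBasis.repr.inner_map_map _ _).symm
    _ = ∑ i, (hA.eigenvectorBasis.repr (toE w) i)
          * (hA.eigenvectorBasis.repr (toE (A *ᵥ w)) i) := by
        simp only [PiLp.inner_apply, RCLike.inner_apply, conj_trivial]
        exact Finset.sum_congr rfl fun i _ => mul_comm _ _
    _ = ∑ i, hA.eigenvalues i * (hA.eigenvectorBasis.repr (toE w) i) ^ 2 := by
        refine Finset.sum_congr rfl fun i _ => ?_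
        rw [repr_mulVec]
        ring

lemma rayleigh_le (hA : A.IsHermitian) (c : ℝ) (w : ι → ℝ)
    (hw : ∀ i, c < hA.eigenvalues i → hA.eigenvectorBasis.repr (toE w) i = 0) :
    w ⬝ᵥ (A *ᵥ w) ≤ c * (w ⬝ᵥ w) := by
  rw [dot_mulVec_eq hA, dot_self_eq hA, Finset.mul_sum]
  refine Finset.sum_le_sum fun i _ => ?_
  by_cases hci : c < hA.eigenvalues i
  · rw [hw i hci]
    simp
  · push_neg at hci
    exact mul_le_mul_of_nonneg_right hci (sq_nonneg _)

lemma rayleigh_lt (hA : A.IsHermitian) (c : ℝ) (w : ι → ℝ) (hw0 : w ≠ 0)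
    (hw : ∀ i, c ≤ hA.eigenvalues i → hA.eigenvectorBasis.repr (toE w) i = 0) :
    w ⬝ᵥ (A *ᵥ w) < c * (w ⬝ᵥ w) := by
  rw [dot_mulVec_eq hA, dot_self_eq hA, Finset.mul_sum]
  have hr0 : hA.eigenvectorBasis.repr (toE w) ≠ 0 := by
    intro h
    apply hw0
    have : toE w = 0 := by
      apply hA.eigenvectorBasis.repr.injective
      simpa using h
    simpa using congrArg toE.symm this
  have hex : ∃ i, hA.eigenvectorBasis.repr (toE w) i ≠ 0 := by
    by_contra hc
    push_neg at hc
    exact hr0 (by ext i; exact hc i)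
  obtain ⟨i₀, hi₀⟩ := hex
  refine Finset.sum_lt_sum (fun i _ => ?_) ⟨i₀, Finset.mem_univ _, ?_⟩
  · by_cases hci : c ≤ hA.eigenvalues i
    · rw [hw i hci]
      simp
    · push_neg at hci
      exact mul_le_mul_of_nonneg_right hci.le (sq_nonneg _)
  · have hlam : hA.eigenvalues i₀ < c := by
      by_contra hc
      push_neg at hc
      exact hi₀ (hw i₀ hc)
    have hpos : 0 < (hA.eigenvectorBasis.repr (toE w) i₀) ^ 2 :=
      (sq_nonneg _).lt_of_ne (Ne.symm (pow_ne_zero _ hi₀))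
    exact mul_lt_mul_of_pos_right hlam hpos

lemma two_eigen_ge (hA : A.IsHermitian) (c : ℝ) (x y : ι → ℝ)
    (hind : ∀ a b : ℝ, (a ≠ 0 ∨ b ≠ 0) → a • x + b • y ≠ 0)
    (h : ∀ a b : ℝ, (a ≠ 0 ∨ b ≠ 0) →
      c * ((a • x + b • y) ⬝ᵥ (a • x + b • y)) ≤ (a • x + b • y) ⬝ᵥ (A *ᵥ (a • x + b • y))) :
    ∃ i j, i ≠ j ∧ c ≤ hA.eigenvalues i ∧ c ≤ hA.eigenvalues j := by
  by_contra hcon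
  push_neg at hcon
  have main : ∀ a b : ℝ, (a ≠ 0 ∨ b ≠ 0) →
      (∀ i, c ≤ hA.eigenvalues i → hA.eigenvectorBasis.repr (toE (a • x + b • y)) i = 0) →
      False := by
    intro a b hab hrepr
    have h1 := rayleigh_lt hA c _ (hind a b hab) hrepr
    have h2 := h a b hab
    linarith
  by_cases hex : ∃ i, c ≤ hA.eigenvalues i
  · obtain ⟨i₀, hi₀⟩ := hex
    have huniq : ∀ i, c ≤ hA.eigenvalues i → i = i₀ := by
      intro i hi
      by_contra hne
      exact absurd hi₀ (not_le.2 (hcon i i₀ hne hi))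
    set α := hA.eigenvectorBasis.repr (toE x) i₀ with hα
    set β := hA.eigenvectorBasis.repr (toE y) i₀ with hβ
    have hlin : ∀ a b : ℝ,
        hA.eigenvectorBasis.repr (toE (a • x + b • y)) i₀ = a * α + b * β := by
      intro a b
      have hE : toE (a • x + b • y) = a • toE x + b • toE y := by
        simp only [map_add, _root_.map_smul]
      rw [hE, map_add, _root_.map_smul, _root_.map_smul]
      simp [hα, hβ, PiLp.add_apply, PiLp.smul_apply, smul_eq_mul]
    by_cases hz : α = 0 ∧ β = 0
    · exact main 1 0 (Or.inl one_ne_zero)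
        (fun i hi => by rw [huniq i hi, hlin]; rw [hz.1, hz.2]; ring)
    · have hab : β ≠ 0 ∨ -α ≠ 0 := by
        rcases not_and_or.mp hz with h' | h'
        · exact Or.inr (neg_ne_zero.2 h')
        · exact Or.inl h'
      exact main β (-α) hab (fun i hi => by rw [huniq i hi, hlin]; ring)
  · push_neg at hex
    exact main 1 0 (Or.inl one_ne_zero)
      (fun i hi => absurd hi (not_le.2 (hex i)))

lemma two_eigen_gt (hA : A.IsHermitian) (c : ℝ) (x y : ι → ℝ)
    (h : ∀ a b : ℝ, (a ≠ 0 ∨ b ≠ 0) →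
      c * ((a • x + b • y) ⬝ᵥ (a • x + b • y)) < (a • x + b • y) ⬝ᵥ (A *ᵥ (a • x + b • y))) :
    ∃ i j, i ≠ j ∧ c < hA.eigenvalues i ∧ c < hA.eigenvalues j := by
  by_contra hcon
  push_neg at hcon
  have main : ∀ a b : ℝ, (a ≠ 0 ∨ b ≠ 0) →
      (∀ i, c < hA.eigenvalues i → hA.eigenvectorBasis.repr (toE (a • x + b • y)) i = 0) →
      False := by
    intro a b hab hrepr
    have h1 := rayleigh_le hA c _ hrepr
    have h2 := h a b hab
    linarith
  by_cases hex : ∃ i, c < hA.eigenvalues i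
  · obtain ⟨i₀, hi₀⟩ := hex
    have huniq : ∀ i, c < hA.eigenvalues i → i = i₀ := by
      intro i hi
      by_contra hne
      exact absurd hi₀ (not_lt.2 (hcon i i₀ hne hi))
    set α := hA.eigenvectorBasis.repr (toE x) i₀ with hα
    set β := hA.eigenvectorBasis.repr (toE y) i₀ with hβ
    have hlin : ∀ a b : ℝ,
        hA.eigenvectorBasis.repr (toE (a • x + b • y)) i₀ = a * α + b * β := by
      intro a b
      have hE : toE (a • x + b • y) = a • toE x + b • toE y := by
        simp only [map_add, _root_.map_smul]
      rw [hE, map_add, _root_.map_smul, _root_.map_smul]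
      simp [hα, hβ, PiLp.add_apply, PiLp.smul_apply, smul_eq_mul]
    by_cases hz : α = 0 ∧ β = 0
    · exact main 1 0 (Or.inl one_ne_zero)
        (fun i hi => by rw [huniq i hi, hlin]; rw [hz.1, hz.2]; ring)
    · have hab : β ≠ 0 ∨ -α ≠ 0 := by
        rcases not_and_or.mp hz with h' | h'
        · exact Or.inr (neg_ne_zero.2 h')
        · exact Or.inl h'
      exact main β (-α) hab (fun i hi => by rw [huniq i hi, hlin]; ring)
  · push_neg at hex
    exact main 1 0 (Or.inl one_ne_zero)
      (fun i hi => absurd hi (not_lt.2 (hex i)))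

end Spectral

section Graph

lemma exists_adj_of_connected {V : Type*} (G : SimpleGraph V) (hG : G.Connected)
    {a b : V} (hab : a ≠ b) : ∃ u v, G.Adj u v := by
  obtain ⟨w⟩ := hG.preconnected a b
  cases w with
  | nil => exact absurd rfl hab
  | cons h _ => exact ⟨_, _, h⟩

lemma exists_triple {V : Type*} (G : SimpleGraph V) :
    ∀ {u v : V}, G.Walk u v → ¬ G.Adj u v → u ≠ v →
      ∃ i k j, G.Adj i k ∧ G.Adj k j ∧ ¬ G.Adj i j ∧ i ≠ j := by
  intro u v p
  induction p with
  | nil => intro _ h; exact absurd rfl h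
  | @cons u a v h q ih =>
    intro hna hne
    by_cases h2 : G.Adj a v
    · exact ⟨u, a, v, h, h2, hna, hne⟩
    · by_cases h3 : a = v
      · subst h3; exact absurd h hna
      · exact ih h2 h3

lemma top_eigen_unique {n : ℕ} (hn : 2 ≤ n)
    (hD : (Matrix.of fun i j => (((⊤ : SimpleGraph (Fin n)).dist i j : ℝ))).IsHermitian) :
    ∀ i j, -1 < hD.eigenvalues i → -1 < hD.eigenvalues j → i = j := by
  intro i j hi hj
  by_contra hij
  have hA : ∀ p q, (Matrix.of fun i j => (((⊤ : SimpleGraph (Fin n)).dist i j : ℝ))) p q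
      = if p = q then 0 else 1 := by
    intro p q
    by_cases h : p = q
    · subst h
      simp [SimpleGraph.dist_self]
    · have : (⊤ : SimpleGraph (Fin n)).dist p q = 1 :=
        SimpleGraph.dist_eq_one_iff_adj.mpr (by simp [h])
      simp [Matrix.of_apply, this, h]
  have hconst : ∀ (m : Fin n), -1 < hD.eigenvalues m →
      ∀ p q, (hD.eigenvectorBasis m) p = (hD.eigenvectorBasis m) q := by
    intro m hm
    have hv := hD.mulVec_eigenvectorBasis m
    have key : ∀ p, (hD.eigenvalues m + 1) * (hD.eigenvectorBasis m) p
        = ∑ q, (hD.eigenvectorBasis m) q := by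
      intro p
      have hvp := congrFun hv p
      simp only [Matrix.mulVec, dotProduct, Pi.smul_apply, smul_eq_mul] at hvp
      have hterm : ∀ q : Fin n,
          (Matrix.of fun i j => (((⊤ : SimpleGraph (Fin n)).dist i j : ℝ))) p q
            * (hD.eigenvectorBasis m) q
          = (hD.eigenvectorBasis m) q - (if p = q then (hD.eigenvectorBasis m) q else 0) := by
        intro q
        rw [hA]
        by_cases hpq : p = q <;> simp [hpq]
      rw [Finset.sum_congr rfl (fun q _ => hterm q), Finset.sum_sub_distrib] at hvp
      simp only [Finset.sum_ite_eq, Finset.mem_univ, if_true] at hvp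
      linarith
    intro p q
    have hne : hD.eigenvalues m + 1 ≠ 0 := by linarith
    exact mul_left_cancel₀ hne ((key p).trans (key q).symm)
  have horth : ⟪hD.eigenvectorBasis i, hD.eigenvectorBasis j⟫ = 0 :=
    hD.eigenvectorBasis.orthonormal.2 hij
  have hnormi : ⟪hD.eigenvectorBasis i, hD.eigenvectorBasis i⟫ = 1 := by
    rw [real_inner_self_eq_norm_mul_norm, hD.eigenvectorBasis.orthonormal.1 i, one_mul]
  have hnormj : ⟪hD.eigenvectorBasis j, hD.eigenvectorBasis j⟫ = 1 := by
    rw [real_inner_self_eq_norm_mul_norm, hD.eigenvectorBasis.orthonormal.1 j, one_mul]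
  set p0 : Fin n := ⟨0, by omega⟩
  have hvc := hconst i hi
  have hwc := hconst j hj
  have hsum : ∀ (f g : EuclideanSpace ℝ (Fin n)), (∀ p q, f p = f q) → (∀ p q, g p = g q) →
      ⟪f, g⟫ = (n : ℝ) * (f p0 * g p0) := by
    intro f g hf hg
    rw [PiLp.inner_apply]
    simp only [RCLike.inner_apply, conj_trivial]
    rw [Finset.sum_congr rfl (fun q _ => by rw [hf q p0, hg q p0])]
    rw [Finset.sum_const, Finset.card_univ, Fintype.card_fin, nsmul_eq_mul]
    ring
  have e1 : (n : ℝ) * ((hD.eigenvectorBasis i) p0 * (hD.eigenvectorBasis j) p0) = 0 := by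
    rw [← hsum _ _ hvc hwc]; exact horth
  have e2 : (n : ℝ) * ((hD.eigenvectorBasis i) p0 * (hD.eigenvectorBasis i) p0) = 1 := by
    rw [← hsum _ _ hvc hvc]; exact hnormi
  have e3 : (n : ℝ) * ((hD.eigenvectorBasis j) p0 * (hD.eigenvectorBasis j) p0) = 1 := by
    rw [← hsum _ _ hwc hwc]; exact hnormj
  have hn0 : (n : ℝ) ≠ 0 := by positivity
  have hvw := (mul_eq_zero.mp e1).resolve_left hn0
  rcases mul_eq_zero.mp hvw with h' | h'
  · rw [h'] at e2; simp at e2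
  · rw [h'] at e3; simp at e3

end Graph

theorem second_distance_eigenvalue_ge_neg_one {n : ℕ} (hn : 2 ≤ n)
    (G : SimpleGraph (Fin n)) (hG : G.Connected)
    (hD : (Matrix.of fun i j => (G.dist i j : ℝ)).IsHermitian) :
    -1 ≤ eig _ hD 2 ∧ (eig _ hD 2 = -1 ↔ G = ⊤) := by
  have hcard : 2 ≤ Fintype.card (Fin n) := by simpa using hn
  have hne01 : (⟨0, by omega⟩ : Fin n) ≠ ⟨1, by omega⟩ := by simp [Fin.ext_iff]
  -- Part 1: -1 ≤ eig
  have part1 : -1 ≤ eig _ hD 2 := by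
    obtain ⟨u, v, huv⟩ := exists_adj_of_connected G hG hne01
    have huvne : u ≠ v := huv.ne
    have hd1 : G.dist u v = 1 := SimpleGraph.dist_eq_one_iff_adj.mpr huv
    have hd1' : G.dist v u = 1 := by rw [SimpleGraph.dist_comm]; exact hd1
    obtain ⟨i, j, hij, hi, hj⟩ := two_eigen_ge hD (-1) (Pi.single u 1) (Pi.single v 1)
      (by
        intro a b hab heq
        have h1 := congrFun heq u
        have h2 := congrFun heq v
        simp [Pi.single_apply, huvne, huvne.symm] at h1 h2
        rcases hab with h' | h' <;> [exact h' h1; exact h' h2])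
      (by
        intro a b hab
        simp [dotProduct_add, add_dotProduct, smul_dotProduct,
          dotProduct_smul, Matrix.mulVec_add, Matrix.mulVec_smul,
          Matrix.mulVec_single, dotProduct_single, single_dotProduct,
          smul_eq_mul, Matrix.of_apply, Pi.single_apply, Pi.smul_apply, Pi.add_apply,
          hd1, hd1', SimpleGraph.dist_self, huvne, huvne.symm, dotProduct, add_mul, mul_add, sub_mul, mul_sub, ite_mul, mul_ite,
          mul_zero, zero_mul, mul_one, one_mul, Finset.sum_add_distrib, Finset.sum_sub_distrib,
          Finset.sum_ite_eq', Finset.mem_univ, if_true]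
        nlinarith [sq_nonneg (a + b)])
    exact le_eig2 hD hcard hij hi hj
  refine ⟨part1, ?_, ?_⟩
  · -- eig = -1 → G = ⊤
    intro heq
    by_contra hnetop
    have hpair : ∃ p q : Fin n, p ≠ q ∧ ¬ G.Adj p q := by
      by_contra hc
      push_neg at hc
      apply hnetop
      ext p q
      simp only [SimpleGraph.top_adj]
      exact ⟨fun h => h.ne, fun h => hc p q h⟩
    obtain ⟨p, q, hpq, hnadj⟩ := hpair
    obtain ⟨w⟩ := hG.preconnected p q
    obtain ⟨i, k, j, hik, hkj, hnij, hijne⟩ := exists_triple G w hnadj hpq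
    have hikne : i ≠ k := hik.ne
    have hkjne : k ≠ j := hkj.ne
    have d_ik : G.dist i k = 1 := SimpleGraph.dist_eq_one_iff_adj.mpr hik
    have d_ki : G.dist k i = 1 := by rw [SimpleGraph.dist_comm]; exact d_ik
    have d_kj : G.dist k j = 1 := SimpleGraph.dist_eq_one_iff_adj.mpr hkj
    have d_jk : G.dist j k = 1 := by rw [SimpleGraph.dist_comm]; exact d_kj
    have d_ij : G.dist i j = 2 := by
      have hle := hG.dist_triangle (u := i) (v := k) (w := j)
      rw [d_ik, d_kj] at hle
      have h0 : G.dist i j ≠ 0 := fun h => hijne ((hG.dist_eq_zero_iff).mp h)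
      have h1 : G.dist i j ≠ 1 := fun h => hnij (SimpleGraph.dist_eq_one_iff_adj.mp h)
      omega
    have d_ji : G.dist j i = 2 := by rw [SimpleGraph.dist_comm]; exact d_ij
    obtain ⟨i', j', hij', hi', hj'⟩ := two_eigen_gt hD (-1)
      (Pi.single i 1 + Pi.single j 1)
      (Pi.single i 1 + Pi.single j 1 - Pi.single k 3)
      (by
        intro a b hab
        simp [dotProduct_add, add_dotProduct, smul_dotProduct,
          dotProduct_smul, sub_dotProduct, dotProduct_sub,
          Matrix.mulVec_add, Matrix.mulVec_smul, Matrix.mulVec_sub, Matrix.mulVec_single,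
          dotProduct_single, single_dotProduct, smul_eq_mul,
          Matrix.of_apply, Pi.single_apply, Pi.smul_apply, Pi.add_apply, Pi.sub_apply,
          d_ik, d_ki, d_kj, d_jk, d_ij, d_ji, SimpleGraph.dist_self,
          hikne, hikne.symm, hkjne, hkjne.symm, hijne, hijne.symm, dotProduct, add_mul, mul_add, sub_mul, mul_sub, ite_mul, mul_ite,
          mul_zero, zero_mul, mul_one, one_mul, Finset.sum_add_distrib, Finset.sum_sub_distrib,
          Finset.sum_ite_eq', Finset.mem_univ, if_true]
        rcases hab with h' | h'
        · have := (sq_nonneg a).lt_of_ne (Ne.symm (pow_ne_zero _ h'))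
          nlinarith [sq_nonneg b, sq_nonneg (a + b)]
        · have := (sq_nonneg b).lt_of_ne (Ne.symm (pow_ne_zero _ h'))
          nlinarith [sq_nonneg a, sq_nonneg (a + b)])
    have := lt_eig2 hD hcard hij' hi' hj'
    linarith [heq ▸ this]
  · -- G = ⊤ → eig = -1
    intro htop
    subst htop
    exact le_antisymm (eig2_le hD hcard (top_eigen_unique hn hD)) part1
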